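/- Shortness of the sup-JSD distance under stochastic pre-composition: for column-stochastic matrices P, Q both indexed by Y×X and any column-stochastic matrix G indexed by X×W (all index types finite and nonempty), D(P·G, Q·G) ≤ D(P,Q), where · denotes matrix multiplication. -/

import Mathlib

open Finset Matrix

noncomputable section

/-- A probability vector on a finite type: nonnegative entries summing to 1. -/
def IsProbVec {X : Type*} [Fintype X] (p : X → ℝ) : Prop :=
  (∀ x, 0 ≤ p x) ∧ ∑ x, p x = 1

/-- Kullback–Leibler divergence, with the convention that terms with `p x = 0`
contribute `0`. -/
noncomputable def KL {X : Type*} [Fintype X] (p q : X → ℝ) : ℝ :=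
  ∑ x, if p x = 0 then 0 else p x * Real.log (p x / q x)

/-- Jensen–Shannon distance. -/
noncomputable def JSD {X : Type*} [Fintype X] (p q : X → ℝ) : ℝ :=
  Real.sqrt ((1 / 2) * KL p (fun x => (p x + q x) / 2)
    + (1 / 2) * KL q (fun x => (p x + q x) / 2))

/-- A column-stochastic matrix: nonnegative entries, every column sums to 1. -/
def IsColStoch {Y X : Type*} [Fintype Y] [Fintype X] (M : Matrix Y X ℝ) : Prop :=
  (∀ y x, 0 ≤ M y x) ∧ ∀ x, ∑ y, M y x = 1

/-- The sup-JSD distance between two matrices of the same shape: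
the maximum over columns of the JSD between corresponding columns. -/
noncomputable def supJSD {Y X : Type*} [Fintype Y] [Fintype X] [Nonempty X]
    (M N : Matrix Y X ℝ) : ℝ :=
  Finset.univ.sup' Finset.univ_nonempty fun x => JSD (fun y => M y x) (fun y => N y x)

/-- An abstraction matrix: entries in {0,1}, every column contains exactly one 1,
and every row contains at least one 1. -/
def IsAbsMatrix {N M : Type*} [Fintype N] [Fintype M] (α : Matrix N M ℝ) : Prop :=
  (∀ j i, α j i = 0 ∨ α j i = 1) ∧ (∀ i, ∃! j, α j i = 1) ∧ (∀ j, ∃ i, α j i = 1)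

/-- The pseudo-inverse `α⁺ = αᵀ·(α·αᵀ)⁻¹` of an abstraction matrix. -/
noncomputable def pinv {N M : Type*} [Fintype N] [Fintype M] [DecidableEq N]
    (α : Matrix N M ℝ) : Matrix M N ℝ :=
  αᵀ * (α * αᵀ)⁻¹

/-- Log-sum inequality. -/
lemma logsum {ι : Type*} [Fintype ι] (a b : ι → ℝ) (ha : ∀ i, 0 ≤ a i)
    (hb : ∀ i, 0 ≤ b i) (hab : ∀ i, b i = 0 → a i = 0) :
    (∑ i, a i) * Real.log ((∑ i, a i) / (∑ i, b i)) ≤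
      ∑ i, a i * Real.log (a i / b i) := by
  set A := ∑ i, a i with hA
  set B := ∑ i, b i with hB
  by_cases hB0 : B = 0
  · have hb0 : ∀ i, b i = 0 := by
      intro i
      exact (Finset.sum_eq_zero_iff_of_nonneg (fun i _ => hb i)).1 hB0 i (mem_univ i)
    have ha0 : ∀ i, a i = 0 := fun i => hab i (hb0 i)
    simp [hA, ha0]
  · have hBpos : 0 < B := lt_of_le_of_ne (Finset.sum_nonneg fun i _ => hb i) (Ne.symm hB0)
    have hw0 : ∀ i ∈ Finset.univ, (0:ℝ) ≤ b i / B := fun i _ => div_nonneg (hb i) hBpos.le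
    have hw1 : ∑ i, b i / B = 1 := by
      rw [← Finset.sum_div, ← hB, div_self hB0]
    have hmem : ∀ i ∈ Finset.univ, a i / b i ∈ Set.Ici (0:ℝ) := fun i _ =>
      div_nonneg (ha i) (hb i)
    have jensen := Real.convexOn_mul_log.map_sum_le hw0 hw1 hmem
    have hsum : ∑ i, (b i / B) • (a i / b i) = A / B := by
      rw [hA, Finset.sum_div]
      refine Finset.sum_congr rfl fun i _ => ?_
      rcases eq_or_ne (b i) 0 with h | h
      · simp [h, hab i h]
      · field_simp
        rw [smul_eq_mul, div_mul_div_comm, mul_comm (b i), mul_div_mul_right _ _ h]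
        field_simp
    rw [hsum] at jensen
    have hrhs : ∑ i, (b i / B) • ((a i / b i) * Real.log (a i / b i)) =
        (∑ i, a i * Real.log (a i / b i)) / B := by
      rw [Finset.sum_div]
      refine Finset.sum_congr rfl fun i _ => ?_
      rcases eq_or_ne (b i) 0 with h | h
      · simp [h, hab i h]
      · field_simp
        rw [smul_eq_mul, div_mul_div_comm, mul_comm (b i), mul_div_mul_right _ _ h]
        field_simp
    rw [hrhs] at jensen
    calc A * Real.log (A / B) = B * (A / B * Real.log (A / B)) := by field_simp
      _ ≤ B * ((∑ i, a i * Real.log (a i / b i)) / B) := by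
          exact mul_le_mul_of_nonneg_left jensen hBpos.le
      _ = ∑ i, a i * Real.log (a i / b i) := by field_simp

/-- Joint convexity-type mixture bound for KL. -/
lemma klmix {Y X : Type*} [Fintype Y] [Fintype X] (g : X → ℝ) (hg : ∀ x, 0 ≤ g x)
    (p m : X → Y → ℝ) (hp : ∀ x y, 0 ≤ p x y) (hm : ∀ x y, 0 ≤ m x y)
    (hpm : ∀ x y, m x y = 0 → p x y = 0) :
    KL (fun y => ∑ x, g x * p x y) (fun y => ∑ x, g x * m x y) ≤
      ∑ x, g x * KL (p x) (m x) := by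
  unfold KL
  rw [show (∑ x, g x * ∑ y, if p x y = 0 then 0 else p x y * Real.log (p x y / m x y))
      = ∑ y, ∑ x, g x * (if p x y = 0 then 0 else p x y * Real.log (p x y / m x y)) by
    rw [Finset.sum_comm]
    exact Finset.sum_congr rfl fun x _ => Finset.mul_sum _ _ _]
  refine Finset.sum_le_sum fun y _ => ?_
  have key := logsum (fun x => g x * p x y) (fun x => g x * m x y)
    (fun x => mul_nonneg (hg x) (hp x y)) (fun x => mul_nonneg (hg x) (hm x y))
    (fun x h => by
      rcases mul_eq_zero.1 h with h | h
      · simp [h]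
      · simp [hpm x y h])
  have hlhs : (if (∑ x, g x * p x y) = 0 then (0:ℝ) else
      (∑ x, g x * p x y) * Real.log ((∑ x, g x * p x y) / (∑ x, g x * m x y)))
      = (∑ x, g x * p x y) * Real.log ((∑ x, g x * p x y) / (∑ x, g x * m x y)) := by
    split <;> simp_all
  rw [hlhs]
  refine key.trans (le_of_eq (Finset.sum_congr rfl fun x _ => ?_))
  rcases eq_or_ne (g x) 0 with h | h
  · simp [h]
  · rcases eq_or_ne (p x y) 0 with h2 | h2
    · simp [h2]
    · rw [if_neg h2, mul_div_mul_left _ _ h]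
      ring

theorem supJSD_shortness_pre {W X Y : Type*}
    [Fintype W] [Nonempty W] [Fintype X] [Nonempty X] [Fintype Y] [Nonempty Y]
    (P Q : Matrix Y X ℝ) (G : Matrix X W ℝ)
    (hP : IsColStoch P) (hQ : IsColStoch Q) (hG : IsColStoch G) :
    supJSD (P * G) (Q * G) ≤ supJSD P Q := by
  obtain ⟨hPnn, hPcol⟩ := hP
  obtain ⟨hQnn, hQcol⟩ := hQ
  obtain ⟨hGnn, hGcol⟩ := hG
  set S : X → ℝ := fun x => (1/2) * KL (fun y => P y x) (fun y => (P y x + Q y x)/2)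
    + (1/2) * KL (fun y => Q y x) (fun y => (P y x + Q y x)/2) with hS
  unfold supJSD
  apply Finset.sup'_le
  intro w _
  -- the JSD argument for column w of P*G, Q*G
  obtain ⟨x₀, _, hx₀⟩ := Finset.exists_mem_eq_sup' (Finset.univ_nonempty (α := X)) S
  have hcolP : (fun y => (P * G) y w) = fun y => ∑ x, G x w * P y x := by
    funext y; simp [Matrix.mul_apply, mul_comm]
  have hcolQ : (fun y => (Q * G) y w) = fun y => ∑ x, G x w * Q y x := by
    funext y; simp [Matrix.mul_apply, mul_comm]
  have hmid : (fun y => ((P * G) y w + (Q * G) y w) / 2)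
      = fun y => ∑ x, G x w * ((P y x + Q y x) / 2) := by
    funext y
    simp only [Matrix.mul_apply]
    rw [← Finset.sum_add_distrib, Finset.sum_div]
    refine Finset.sum_congr rfl fun x _ => ?_
    ring
  have hKLP : KL (fun y => (P * G) y w) (fun y => ((P * G) y w + (Q * G) y w) / 2)
      ≤ ∑ x, G x w * KL (fun y => P y x) (fun y => (P y x + Q y x)/2) := by
    rw [hcolP, hmid]
    exact klmix (fun x => G x w) (fun x => hGnn x w) (fun x y => P y x)
      (fun x y => (P y x + Q y x)/2) (fun x y => hPnn y x)
      (fun x y => by have := hPnn y x; have := hQnn y x; positivity)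
      (fun x y h => by have := hPnn y x; have := hQnn y x; linarith)
  have hKLQ : KL (fun y => (Q * G) y w) (fun y => ((P * G) y w + (Q * G) y w) / 2)
      ≤ ∑ x, G x w * KL (fun y => Q y x) (fun y => (P y x + Q y x)/2) := by
    rw [hcolQ, hmid]
    exact klmix (fun x => G x w) (fun x => hGnn x w) (fun x y => Q y x)
      (fun x y => (P y x + Q y x)/2) (fun x y => hQnn y x)
      (fun x y => by have := hPnn y x; have := hQnn y x; positivity)
      (fun x y h => by have := hPnn y x; have := hQnn y x; linarith)
  have havg : ∑ x, G x w * S x ≤ S x₀ := by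
    calc ∑ x, G x w * S x ≤ ∑ x, G x w * S x₀ := by
          refine Finset.sum_le_sum fun x _ => ?_
          refine mul_le_mul_of_nonneg_left ?_ (hGnn x w)
          rw [← hx₀]
          exact Finset.le_sup' S (mem_univ x)
      _ = S x₀ := by rw [← Finset.sum_mul, hGcol w, one_mul]
  have hJ : JSD (fun y => (P * G) y w) (fun y => (Q * G) y w) ≤
      JSD (fun y => P y x₀) (fun y => Q y x₀) := by
    unfold JSD
    apply Real.sqrt_le_sqrt
    have : (1/2) * KL (fun y => (P*G) y w) (fun y => ((P*G) y w + (Q*G) y w)/2)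
        + (1/2) * KL (fun y => (Q*G) y w) (fun y => ((P*G) y w + (Q*G) y w)/2)
        ≤ ∑ x, G x w * S x := by
      have : ∑ x, G x w * S x = (1/2) * (∑ x, G x w * KL (fun y => P y x) (fun y => (P y x + Q y x)/2))
          + (1/2) * (∑ x, G x w * KL (fun y => Q y x) (fun y => (P y x + Q y x)/2)) := by
        rw [Finset.mul_sum, Finset.mul_sum, ← Finset.sum_add_distrib]
        exact Finset.sum_congr rfl fun x _ => by rw [hS]; ring
      rw [this]
      linarith
    exact this.trans havg
  exact hJ.trans (Finset.le_sup' (fun x => JSD (fun y => P y x) (fun y => Q y x)) (mem_univ x₀))
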